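/- Let p be a prime, let m ≥ 1, and let s, ℓ, r be powers of p (i.e. s = p^i, ℓ = p^j, r = p^k with i, j, k ≥ 1) with s ≤ ℓ ≤ r < p^m. If s + ℓ + r − 2 = p^m, then p = 2 and s = 2. -/
import Mathlib


/-- If `s ≤ ℓ ≤ r < p^m` are positive powers of a prime `p` with `s + ℓ + r - 2 = p^m`,
then `p = 2` and `s = 2`. -/
theorem sum_powers_minus_two (p : ℕ) (hp : p.Prime) (m : ℕ) (hm : 1 ≤ m) (s l r : ℕ)
    (hs : ∃ i : ℕ, 1 ≤ i ∧ s = p ^ i) (hl : ∃ j : ℕ, 1 ≤ j ∧ l = p ^ j)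
    (hr : ∃ k : ℕ, 1 ≤ k ∧ r = p ^ k)
    (hsl : s ≤ l) (hlr : l ≤ r) (hrm : r < p ^ m)
    (heq : s + l + r = p ^ m + 2) :
    p = 2 ∧ s = 2 := by
  obtain ⟨i, hi, rfl⟩ := hs
  obtain ⟨j, hj, rfl⟩ := hl
  obtain ⟨k, hk, rfl⟩ := hr
  have hp1 : 1 < p := hp.one_lt
  have hdvd : ∀ n : ℕ, 1 ≤ n → p ∣ p ^ n := fun n hn => dvd_pow_self p (by omega)
  have hp2 : p = 2 := by
    have h2 : p ∣ 2 := by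
      have h : p ∣ p ^ i + p ^ j + p ^ k := by
        exact dvd_add (dvd_add (hdvd i hi) (hdvd j hj)) (hdvd k hk)
      rw [heq] at h
      exact (Nat.dvd_add_right (hdvd m hm)).mp h
    exact (Nat.prime_dvd_prime_iff_eq hp Nat.prime_two).mp h2
  subst hp2
  refine ⟨rfl, ?_⟩
  have hkm : k < m := by
    by_contra h
    exact absurd (pow_le_pow_right₀ (by norm_num : 1 ≤ 2) (not_lt.mp h)) (not_le.mpr hrm)
  have hij : i ≤ j := (pow_le_pow_iff_right₀ (by norm_num : 1 < 2)).mp hsl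
  have hi1 : i = 1 := by
    by_contra h
    have hi2 : 2 ≤ i := by omega
    have hjk : j ≤ k := (pow_le_pow_iff_right₀ (by norm_num : 1 < 2)).mp hlr
    have h4 : ∀ n : ℕ, 2 ≤ n → 4 ∣ 2 ^ n := by
      intro n hn
      calc (4:ℕ) = 2 ^ 2 := by norm_num
      _ ∣ 2 ^ n := pow_dvd_pow 2 hn
    have hd : (4:ℕ) ∣ 2 ^ i + 2 ^ j + 2 ^ k :=
      dvd_add (dvd_add (h4 i hi2) (h4 j (by omega))) (h4 k (by omega))
    rw [heq] at hd
    have hdm := h4 m (by omega)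
    have : (4:ℕ) ∣ 2 := (Nat.dvd_add_right hdm).mp hd
    omega
  rw [hi1, pow_one]
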